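/- arXiv:2305.07278 — 2 statements merged into one kernel-verified Lean document; each statement's English description precedes it below -/
import Mathlib

section
/- Let S ∈ ℂ^{M̃×Ñ} (with M̃ ≤ Ñ) be a matrix such that every M̃ columns of S are linearly independent. Let X₀ ∈ ℂ^{Ñ×L̃} have row-sparsity r, set Y = S·X₀, and assume rank(Y) = L̃ with L̃ ≤ M̃. If r ≤ ⌈(M̃+L̃)/2⌉ − 1, then X₀ is the unique sparsest solution of Y = S·X: every matrix X ∈ ℂ^{Ñ×L̃} with S·X = Y and X ≠ X₀ has row-sparsity strictly greater than r. -/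
open Module Submodule

/-- A vector supported on `Ω` lies in the span of the standard basis vectors
indexed by `Ω`. -/
private lemma mmv_mem_span_single {n : ℕ} (Ω : Finset (Fin n)) (v : Fin n → ℂ)
    (h : ∀ i ∉ Ω, v i = 0) :
    v ∈ span ℂ ((fun i => (Pi.single i (1:ℂ) : Fin n → ℂ)) '' (Ω : Set (Fin n))) := by
  classical
  have hv : v = ∑ i ∈ Ω, v i • (Pi.single i (1:ℂ) : Fin n → ℂ) := by
    funext j
    rw [Finset.sum_apply]
    by_cases hj : j ∈ Ω
    · rw [Finset.sum_eq_single j]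
      · simp
      · intro b _ hbj
        have : j ≠ b := Ne.symm hbj
        simp [Pi.single_apply, this]
      · intro hj'; exact absurd hj hj'
    · rw [h j hj]
      refine (Finset.sum_eq_zero fun b hb => ?_).symm
      have hjb : j ≠ b := fun e => hj (e ▸ hb)
      simp [Pi.single_apply, hjb]
  rw [hv]
  exact Submodule.sum_mem _ fun i hi => Submodule.smul_mem _ _
    (Submodule.subset_span ⟨i, hi, rfl⟩)

private lemma mmv_finrank_span_single {n : ℕ} (Ω : Finset (Fin n)) :
    finrank ℂ (span ℂ ((fun i => (Pi.single i (1:ℂ) : Fin n → ℂ)) '' (Ω : Set (Fin n)))) = Ω.card := by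
  classical
  have hli : LinearIndependent ℂ (fun i : Ω => (Pi.single (i : Fin n) (1:ℂ) : Fin n → ℂ)) := by
    have h2 : (fun i : Ω => (Pi.single (i : Fin n) (1:ℂ) : Fin n → ℂ))
        = (Pi.basisFun ℂ (Fin n)) ∘ (fun i : Ω => (i : Fin n)) := by
      funext i; simp
    rw [h2]
    exact (Pi.basisFun ℂ (Fin n)).linearIndependent.comp _ Subtype.val_injective
  have h1 := finrank_span_eq_card hli
  rw [Fintype.card_coe] at h1
  have hset : (Set.range fun i : Ω => (Pi.single (i : Fin n) (1:ℂ) : Fin n → ℂ))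
      = (fun i => (Pi.single i (1:ℂ) : Fin n → ℂ)) '' (Ω : Set (Fin n)) := by
    rw [show (fun i : Ω => (Pi.single (i : Fin n) (1:ℂ) : Fin n → ℂ))
        = (fun i => (Pi.single i (1:ℂ) : Fin n → ℂ)) ∘ (Subtype.val) from rfl,
      Set.range_comp, Subtype.range_coe]
  rw [hset] at h1
  exact h1

/-- **Uniqueness condition for the noiseless MMV problem.**
If every `M` columns of `S : ℂ^{M×N}` are linearly independent, `X₀` has
row-sparsity `r`, `Y = S * X₀` has rank `L ≤ M`, and
`r ≤ ⌈(M+L)/2⌉ - 1`, then any other solution `X` of `S * X = Y` has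
row-sparsity strictly greater than `r`. -/
theorem mmv_uniqueness (M N L : ℕ) (hMN : M ≤ N)
    (S : Matrix (Fin M) (Fin N) ℂ)
    (hS : ∀ T : Finset (Fin N), T.card = M →
      LinearIndependent ℂ (fun j : T => S.transpose (j : Fin N)))
    (X₀ : Matrix (Fin N) (Fin L) ℂ) (r : ℕ)
    (hX₀ : {i | X₀ i ≠ 0}.ncard = r)
    (Y : Matrix (Fin M) (Fin L) ℂ) (hY : Y = S * X₀)
    (hrank : Y.rank = L) (hLM : L ≤ M)
    (hbound : (r : ℤ) ≤ ⌈((M : ℚ) + L) / 2⌉ - 1) :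
    ∀ X : Matrix (Fin N) (Fin L) ℂ, S * X = Y → X ≠ X₀ →
      r < {i | X i ≠ 0}.ncard := by
  intro X hX hXne
  by_contra hcon
  push_neg at hcon
  classical
  -- support finsets
  set T₁ : Finset (Fin N) := Finset.univ.filter (fun i => X i ≠ 0) with hT₁def
  set T₂ : Finset (Fin N) := Finset.univ.filter (fun i => X₀ i ≠ 0) with hT₂def
  have hT₁card : T₁.card ≤ r := by
    have h : {i | X i ≠ 0} = ↑T₁ := by ext i; simp [hT₁def]
    rwa [h, Set.ncard_coe_finset] at hcon
  have hT₂card : T₂.card = r := by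
    have h : {i | X₀ i ≠ 0} = ↑T₂ := by ext i; simp [hT₂def]
    rwa [h, Set.ncard_coe_finset] at hX₀
  set Ω : Finset (Fin N) := T₁ ∪ T₂ with hΩdef
  set D : Matrix (Fin N) (Fin L) ℂ := X - X₀ with hDdef
  have hSD : S * D = 0 := by rw [hDdef, Matrix.mul_sub, hX, ← hY, sub_self]
  have hDne : D ≠ 0 := sub_ne_zero.mpr hXne
  -- columns of D are supported on Ω
  have hDsupp : ∀ (c : Fin L → ℂ) (i : Fin N), i ∉ Ω → D.mulVec c i = 0 := by
    intro c i hi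
    have h1 : X i = 0 := by
      by_contra h
      exact hi (Finset.mem_union_left _ (by simp [hT₁def, h]))
    have h2 : X₀ i = 0 := by
      by_contra h
      exact hi (Finset.mem_union_right _ (by simp [hT₂def, h]))
    have hrow : ∀ j, D i j = 0 := by
      intro j
      simp [hDdef, Matrix.sub_apply, congrFun h1 j, congrFun h2 j]
    simp [Matrix.mulVec, dotProduct, hrow]
  -- X has full column rank, hence injective
  have hXrank : X.rank = L := by
    refine le_antisymm (Matrix.rank_le_width X) ?_
    have h := Matrix.rank_mul_le_right S X
    rw [hX, hrank] at h
    exact h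
  have hXinj : Function.Injective X.mulVecLin := by
    rw [← LinearMap.ker_eq_bot]
    have h1 := X.mulVecLin.finrank_range_add_finrank_ker
    have h2 : finrank ℂ (LinearMap.range X.mulVecLin) = L := hXrank
    rw [h2, Module.finrank_pi, Fintype.card_fin] at h1
    have h3 : finrank ℂ (LinearMap.ker X.mulVecLin) = 0 := by omega
    exact Submodule.finrank_eq_zero.mp h3
  -- rank-nullity for D
  have hkerD : D.rank + finrank ℂ (LinearMap.ker D.mulVecLin) = L := by
    have h1 := D.mulVecLin.finrank_range_add_finrank_ker
    rwa [Module.finrank_pi, Fintype.card_fin] at h1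
  -- the kernel of D embeds (via X) into vectors supported on T₁ ∩ T₂
  set Tc : Finset (Fin N) := T₁ ∩ T₂ with hTcdef
  set Wc : Submodule ℂ (Fin N → ℂ) :=
    span ℂ ((fun i => Pi.single i (1:ℂ)) '' (Tc : Set (Fin N))) with hWcdef
  have hKdTc : finrank ℂ (LinearMap.ker D.mulVecLin) ≤ Tc.card := by
    set φ : LinearMap.ker D.mulVecLin →ₗ[ℂ] (Fin N → ℂ) :=
      X.mulVecLin.domRestrict (LinearMap.ker D.mulVecLin) with hφdef
    have hφinj : Function.Injective φ := by
      intro a b hab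
      exact Subtype.ext (hXinj hab)
    have hφrange : LinearMap.range φ ≤ Wc := by
      rintro _ ⟨c, rfl⟩
      refine mmv_mem_span_single Tc _ ?_
      intro i hi
      have hceq : φ c = X.mulVec (c : Fin L → ℂ) := rfl
      have hc0 : D.mulVec (c : Fin L → ℂ) = 0 := c.2
      by_cases h1 : i ∈ T₁
      · have h2 : i ∉ T₂ := fun h => hi (Finset.mem_inter.mpr ⟨h1, h⟩)
        have hX₀i : X₀ i = 0 := by
          by_contra h
          exact h2 (by simp [hT₂def, h])
        have heq : X.mulVec (c : Fin L → ℂ) = X₀.mulVec (c : Fin L → ℂ) := by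
          have hsub : X.mulVec (c : Fin L → ℂ) - X₀.mulVec (c : Fin L → ℂ) = 0 := by
            rw [← Matrix.sub_mulVec]
            exact hc0
          exact sub_eq_zero.mp hsub
        rw [hceq, heq]
        have hrow : ∀ j, X₀ i j = 0 := fun j => congrFun hX₀i j
        simp [Matrix.mulVec, dotProduct, hrow]
      · have hXi : X i = 0 := by
          by_contra h
          exact h1 (by simp [hT₁def, h])
        rw [hceq]
        have hrow : ∀ j, X i j = 0 := fun j => congrFun hXi j
        simp [Matrix.mulVec, dotProduct, hrow]
    have h1 : finrank ℂ (LinearMap.range φ) = finrank ℂ (LinearMap.ker D.mulVecLin) :=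
      LinearMap.finrank_range_of_inj hφinj
    calc finrank ℂ (LinearMap.ker D.mulVecLin)
        = finrank ℂ (LinearMap.range φ) := h1.symm
      _ ≤ finrank ℂ Wc := Submodule.finrank_mono hφrange
      _ = Tc.card := mmv_finrank_span_single Tc
  -- vectors supported on Ω
  set Wo : Submodule ℂ (Fin N → ℂ) :=
    span ℂ ((fun i => Pi.single i (1:ℂ)) '' (Ω : Set (Fin N))) with hWodef
  have hrange : LinearMap.range D.mulVecLin ≤ LinearMap.ker S.mulVecLin ⊓ Wo := by
    rintro _ ⟨c, rfl⟩
    refine Submodule.mem_inf.mpr ⟨?_, ?_⟩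
    · rw [LinearMap.mem_ker]
      show S.mulVec (D.mulVec c) = 0
      rw [Matrix.mulVec_mulVec, hSD, Matrix.zero_mulVec]
    · exact mmv_mem_span_single Ω _ (hDsupp c)
  by_cases hsize : Ω.card < M
  · -- small union support: D = 0, contradiction
    obtain ⟨T, hΩT, hTcard⟩ := Finset.exists_superset_card_eq (le_of_lt hsize)
      (by rw [Fintype.card_fin]; exact hMN)
    apply hDne
    ext i j
    have hcol : D.mulVec (Pi.single j 1) = 0 := by
      set v : Fin N → ℂ := D.mulVec (Pi.single j 1) with hvdef
      have hv0 : ∀ k ∉ Ω, v k = 0 := fun k hk => hDsupp _ k hk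
      have hv0' : ∀ k ∉ T, v k = 0 := fun k hk => hv0 k (fun h => hk (hΩT h))
      have hSv : S.mulVec v = 0 := by
        rw [hvdef, Matrix.mulVec_mulVec, hSD, Matrix.zero_mulVec]
      have hrepr : (∑ k ∈ T, v k • S.transpose k) = S.mulVec v := by
        funext m
        rw [Finset.sum_apply]
        have h2 : S.mulVec v m = ∑ k, S m k * v k := by
          simp [Matrix.mulVec, dotProduct]
        rw [h2, ← Finset.sum_subset (Finset.subset_univ T)
          (fun k _ hk => by rw [hv0' k hk, mul_zero])]
        refine Finset.sum_congr rfl fun k _ => ?_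
        simp [Matrix.transpose_apply, mul_comm]
      have hsum : ∑ k : T, v (k : Fin N) • S.transpose (k : Fin N) = 0 := by
        rw [Finset.sum_coe_sort T (fun k => v k • S.transpose k), hrepr, hSv]
      have hz := Fintype.linearIndependent_iff.mp (hS T hTcard)
        (fun k => v (k : Fin N)) hsum
      funext k
      by_cases hk : k ∈ T
      · exact hz ⟨k, hk⟩
      · exact hv0' k hk
    have h := congrFun hcol i
    simpa using h
  · push_neg at hsize
    obtain ⟨T, hTΩ, hTcard⟩ := Finset.exists_subset_card_eq hsize
    set f : Wo →ₗ[ℂ] (Fin M → ℂ) := S.mulVecLin.domRestrict Wo with hfdef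
    have hWocard : finrank ℂ Wo = Ω.card := mmv_finrank_span_single Ω
    have hrn := f.finrank_range_add_finrank_ker
    have hMle : M ≤ finrank ℂ (LinearMap.range f) := by
      have hcols : span ℂ (Set.range fun j : T => S.transpose (j : Fin N))
          ≤ LinearMap.range f := by
        rw [Submodule.span_le]
        rintro _ ⟨j, rfl⟩
        have hmem : (Pi.single (j : Fin N) (1:ℂ)) ∈ Wo :=
          Submodule.subset_span ⟨(j : Fin N), hTΩ j.2, rfl⟩
        refine ⟨⟨_, hmem⟩, ?_⟩
        show S.mulVec (Pi.single (j : Fin N) 1) = S.transpose (j : Fin N)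
        funext m
        simp [Matrix.mulVec_single, Matrix.transpose_apply]
      have h1 := finrank_span_eq_card (hS T hTcard)
      rw [Fintype.card_coe, hTcard] at h1
      calc M = finrank ℂ (span ℂ (Set.range fun j : T => S.transpose (j : Fin N))) :=
            h1.symm
        _ ≤ finrank ℂ (LinearMap.range f) := Submodule.finrank_mono hcols
    have hkerf : finrank ℂ (LinearMap.ker f)
        = finrank ℂ ((LinearMap.ker S.mulVecLin ⊓ Wo : Submodule ℂ (Fin N → ℂ))) := by
      have h1 : LinearMap.ker f
          = Submodule.comap Wo.subtype (LinearMap.ker S.mulVecLin ⊓ Wo) := by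
        rw [LinearMap.ker_domRestrict, Submodule.comap_inf, Submodule.comap_subtype_self,
          inf_top_eq]
      rw [h1]
      exact (Submodule.comapSubtypeEquivOfLe inf_le_right).finrank_eq
    have hDrank : D.rank
        ≤ finrank ℂ ((LinearMap.ker S.mulVecLin ⊓ Wo : Submodule ℂ (Fin N → ℂ))) :=
      Submodule.finrank_mono hrange
    have hΩbig : M + D.rank ≤ Ω.card := by
      rw [hWocard] at hrn
      omega
    have hcardsum : T₁.card + T₂.card = Ω.card + Tc.card :=
      (Finset.card_union_add_card_inter T₁ T₂).symm
    have hML : M + L ≤ 2 * r := by omega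
    have h1 : ((⌈((M:ℚ) + L) / 2⌉ : ℚ)) < ((M:ℚ) + L) / 2 + 1 := Int.ceil_lt_add_one _
    have h2 : (r : ℚ) ≤ ((⌈((M:ℚ) + L) / 2⌉ : ℚ)) - 1 := by exact_mod_cast hbound
    have h3 : ((M:ℚ) + L) ≤ 2 * r := by exact_mod_cast hML
    linarith
end

section
/- Let S ∈ ℂ^{M̃×Ñ}, and suppose X₁, X₂ ∈ ℂ^{Ñ×L̃} satisfy S·X₁ = S·X₂ = Y with rank(Y) = L̃. Let R₁ and R₂ be the row-supports of X₁ and X₂, of cardinalities r₁ and r₂ respectively, let S^{r₁} ∈ ℂ^{M̃×r₁} and S^{r₂} ∈ ℂ^{M̃×r₂} be the submatrices of S consisting of the columns indexed by R₁ and R₂, and let X₁^{r₁} ∈ ℂ^{r₁×L̃} and X₂^{r₂} ∈ ℂ^{r₂×L̃} be the submatrices of X₁ and X₂ consisting of their nonzero rows. Then the columns of the stacked matrix [X₁^{r₁}; −X₂^{r₂}] ∈ ℂ^{(r₁+r₂)×L̃} lie in the null space of the concatenated matrix [S^{r₁}, S^{r₂}] ∈ ℂ^{M̃×(r₁+r₂)},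 the stacked matrix has rank at least L̃, and consequently the null space of [S^{r₁}, S^{r₂}] has dimension at least L̃. -/
open Classical in
private lemma mmv_sum_support {N L : ℕ} (X : Matrix (Fin N) (Fin L) ℂ)
    (f : Fin N → ℂ) (l : Fin L) :
    ∑ j : {i : Fin N // X i ≠ 0}, f j.1 * X j.1 l = ∑ j, f j * X j l := by
  classical
  rw [← Finset.sum_filter_of_ne (s := Finset.univ) (p := fun j => X j ≠ 0)
      (f := fun j => f j * X j l)]
  · exact (Finset.sum_subtype (Finset.univ.filter (fun j => X j ≠ 0)) (fun x => by simp) (fun j => f j * X j l)).symm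
  · intro j _ h hX
    exact h (by simp [hX])

open Classical in
/-- **Null-space dimension claim in the proof of the sufficient condition.**
If `X₁` and `X₂` solve `S * X = Y` with `rank Y = L`, then the columns of the
stacked matrix `[X₁^{r₁}; -X₂^{r₂}]` (formed from the nonzero rows of `X₁` and
`-X₂`) lie in the null space of the concatenated matrix `[S^{r₁}, S^{r₂}]`
(formed from the columns of `S` indexed by the two row-supports), the stacked
matrix has rank at least `L`, and hence the null space of `[S^{r₁}, S^{r₂}]`
has dimension at least `L`. -/
theorem mmv_nullspace_dimension (M N L : ℕ)
    (S : Matrix (Fin M) (Fin N) ℂ)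
    (X₁ X₂ : Matrix (Fin N) (Fin L) ℂ)
    (Y : Matrix (Fin M) (Fin L) ℂ)
    (h₁ : S * X₁ = Y) (h₂ : S * X₂ = Y)
    (hrank : Y.rank = L)
    -- the concatenated matrix [S^{r₁}, S^{r₂}], columns indexed by the
    -- row-supports of X₁ and X₂
    (A : Matrix (Fin M) ({i : Fin N // X₁ i ≠ 0} ⊕ {i : Fin N // X₂ i ≠ 0}) ℂ)
    (hA : A = Matrix.of fun i =>
      Sum.elim (fun j : {i : Fin N // X₁ i ≠ 0} => S i j.1)
               (fun j : {i : Fin N // X₂ i ≠ 0} => S i j.1))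
    -- the stacked matrix [X₁^{r₁}; -X₂^{r₂}], rows being the nonzero rows of
    -- X₁ and of -X₂
    (B : Matrix ({i : Fin N // X₁ i ≠ 0} ⊕ {i : Fin N // X₂ i ≠ 0}) (Fin L) ℂ)
    (hB : B = Matrix.of
      (Sum.elim (fun j : {i : Fin N // X₁ i ≠ 0} => X₁ j.1)
                (fun j : {i : Fin N // X₂ i ≠ 0} => -X₂ j.1))) :
    (∀ l : Fin L, (fun p => B p l) ∈ LinearMap.ker A.mulVecLin) ∧
      L ≤ B.rank ∧
      L ≤ Module.finrank ℂ (LinearMap.ker A.mulVecLin) := by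
  -- A * B = S X₁ - S X₂ = Y - Y = 0
  have hAB : A * B = 0 := by
    ext i l
    have e1 : (S * X₁) i l = Y i l := by rw [h₁]
    have e2 : (S * X₂) i l = Y i l := by rw [h₂]
    rw [Matrix.mul_apply] at e1 e2
    simp only [hA, hB, Matrix.mul_apply, Matrix.of_apply, Sum.elim_inl, Sum.elim_inr,
      Fintype.sum_sum_type, Matrix.zero_apply, Pi.neg_apply, mul_neg]
    rw [Finset.sum_neg_distrib, mmv_sum_support X₁ (fun j => S i j) l,
      mmv_sum_support X₂ (fun j => S i j) l, e1, e2]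
    ring
  -- Y = G * B for the block matrix G = [S^{r₁}, 0]
  set G : Matrix (Fin M) ({i : Fin N // X₁ i ≠ 0} ⊕ {i : Fin N // X₂ i ≠ 0}) ℂ :=
    Matrix.of fun i => Sum.elim (fun j : {i : Fin N // X₁ i ≠ 0} => S i j.1)
      (fun _ => 0) with hG
  have hYB : Y = G * B := by
    ext i l
    have e1 : (S * X₁) i l = Y i l := by rw [h₁]
    rw [Matrix.mul_apply] at e1
    simp only [hG, hB, Matrix.mul_apply, Matrix.of_apply, Sum.elim_inl, Sum.elim_inr,
      Fintype.sum_sum_type, zero_mul, Finset.sum_const_zero, add_zero]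
    rw [mmv_sum_support X₁ (fun j => S i j) l, e1]
  have hrankB : L ≤ B.rank := by
    calc L = Y.rank := hrank.symm
    _ = (G * B).rank := by rw [← hYB]
    _ ≤ B.rank := Matrix.rank_mul_le_right G B
  have hker : ∀ l : Fin L, (fun p => B p l) ∈ LinearMap.ker A.mulVecLin := by
    intro l
    rw [LinearMap.mem_ker]
    funext i
    have : (A * B) i l = 0 := by rw [hAB]; simp
    simpa [Matrix.mulVecLin_apply, Matrix.mulVec, dotProduct, Matrix.mul_apply] using this
  refine ⟨hker, hrankB, ?_⟩
  have hrange : LinearMap.range B.mulVecLin ≤ LinearMap.ker A.mulVecLin := by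
    rw [LinearMap.range_le_ker_iff, ← Matrix.mulVecLin_mul, hAB]
    exact Matrix.mulVecLin_zero
  calc L ≤ B.rank := hrankB
  _ = Module.finrank ℂ (LinearMap.range B.mulVecLin) := rfl
  _ ≤ Module.finrank ℂ (LinearMap.ker A.mulVecLin) := Submodule.finrank_mono hrange
end
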